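/- Let n1, n2 be positive integers and let γ* ∈ ℝ^{n1×n2} have strictly positive entries. Define F(γ) = KL(γ*, γ) for γ ∈ ℝ^{n1×n2} with nonnegative entries (with F(γ) = +∞ if some γ_{ij} = 0 while γ*_{ij} > 0). Then for every M > 0, the sublevel set { γ ∈ ℝ^{n1×n2} : γ has nonnegative entries and F(γ) ≤ M } is compact. -/

import Mathlib

open scoped BigOperators

lemma term_nonneg' (g x : ℝ) (hg : 0 < g) (hx : 0 < x) :
    0 ≤ g * (Real.log (g / x) - 1) + x := by
  have h := Real.log_le_sub_one_of_pos (show (0:ℝ) < x / g by positivity)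
  have hlog : Real.log (g / x) = - Real.log (x / g) := by
    rw [← Real.log_inv]; congr 1; field_simp
  rw [hlog]
  have h2 : g * (x / g) = x := by field_simp
  nlinarith [mul_le_mul_of_nonneg_left h hg.le]

lemma term_bounds (g x M : ℝ) (hg : 0 < g) (hx : 0 < x)
    (h : g * (Real.log (g / x) - 1) + x ≤ M) :
    g * Real.exp (-1 - M / g) ≤ x ∧ x ≤ 2 * (M + g * Real.log 2) := by
  have hlog : Real.log (g / x) = Real.log g - Real.log x := Real.log_div (ne_of_gt hg) (ne_of_gt hx)
  rw [hlog] at h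
  have hMg : g * (M / g) = M := by field_simp
  constructor
  · have h1 : Real.log g - 1 - M / g ≤ Real.log x :=
      (mul_le_mul_iff_right₀ hg).mp (show g * (Real.log g - 1 - M / g) ≤ g * Real.log x from by nlinarith)
    calc g * Real.exp (-1 - M / g) = Real.exp (Real.log g + (-1 - M / g)) := by
          rw [Real.exp_add, Real.exp_log hg]
      _ ≤ Real.exp (Real.log x) := by apply Real.exp_le_exp.2; linarith
      _ = x := Real.exp_log hx
  · have h2 := Real.log_le_sub_one_of_pos (show (0:ℝ) < x / (2 * g) by positivity)
    have h3 : Real.log (x / (2 * g)) = Real.log x - (Real.log 2 + Real.log g) := by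
      rw [Real.log_div (ne_of_gt hx) (by positivity), Real.log_mul (by norm_num) (ne_of_gt hg)]
    rw [h3] at h2
    have hgx : g * (x / (2 * g)) = x / 2 := by field_simp
    nlinarith [mul_le_mul_of_nonneg_left h2 hg.le]

open Classical in
/-- `F(γ) = KL(γ*, γ)`, valued in `EReal`, with `F(γ) = ⊤` when some entry of `γ`
vanishes (while `γ*` has positive entries). -/
noncomputable def lyapunovF {n1 n2 : ℕ} (gstar γ : Matrix (Fin n1) (Fin n2) ℝ) : EReal :=
  if ∀ i j, 0 < γ i j then
    (((∑ i, ∑ j, gstar i j * (Real.log (gstar i j / γ i j) - 1)) + ∑ i, ∑ j, γ i j : ℝ) : EReal)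
  else ⊤

theorem stmt_0 (n1 n2 : ℕ) (hn1 : 0 < n1) (hn2 : 0 < n2)
    (gstar : Matrix (Fin n1) (Fin n2) ℝ) (hgs : ∀ i j, 0 < gstar i j)
    (M : ℝ) (hM : 0 < M) :
    IsCompact {γ : Matrix (Fin n1) (Fin n2) ℝ |
      (∀ i j, 0 ≤ γ i j) ∧ lyapunovF gstar γ ≤ (M : EReal)} := by
  classical
  set ε : Fin n1 → Fin n2 → ℝ := fun i j => gstar i j * Real.exp (-1 - M / gstar i j) with hε
  set C : Fin n1 → Fin n2 → ℝ := fun i j => 2 * (M + gstar i j * Real.log 2) with hC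
  have hεpos : ∀ i j, 0 < ε i j := fun i j => by
    have := hgs i j; positivity
  -- the continuous surrogate
  set f : Matrix (Fin n1) (Fin n2) ℝ → ℝ := fun γ =>
    ∑ i, ∑ j, (gstar i j * (Real.log (gstar i j / max (γ i j) (ε i j)) - 1) + γ i j) with hf
  have hcont : Continuous f := by
    apply continuous_finset_sum; intro i _
    apply continuous_finset_sum; intro j _
    have hx : Continuous fun γ : Matrix (Fin n1) (Fin n2) ℝ => γ i j :=
      (continuous_apply j).comp (continuous_apply i)
    have hmax : Continuous fun γ : Matrix (Fin n1) (Fin n2) ℝ => max (γ i j) (ε i j) :=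
      hx.max continuous_const
    have hdiv : Continuous fun γ : Matrix (Fin n1) (Fin n2) ℝ => gstar i j / max (γ i j) (ε i j) :=
      continuous_const.div hmax fun γ => ne_of_gt (lt_of_lt_of_le (hεpos i j) (le_max_right _ _))
    have hlog : Continuous fun γ : Matrix (Fin n1) (Fin n2) ℝ =>
        Real.log (gstar i j / max (γ i j) (ε i j)) := by
      apply hdiv.log
      intro γ
      exact ne_of_gt (div_pos (hgs i j) (lt_of_lt_of_le (hεpos i j) (le_max_right _ _)))
    exact (continuous_const.mul (hlog.sub continuous_const)).add hx
  -- value agreement on the box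
  have hval : ∀ γ : Matrix (Fin n1) (Fin n2) ℝ, (∀ i j, ε i j ≤ γ i j) →
      f γ = (∑ i, ∑ j, gstar i j * (Real.log (gstar i j / γ i j) - 1)) + ∑ i, ∑ j, γ i j := by
    intro γ hγ
    rw [hf]
    rw [← Finset.sum_add_distrib]
    refine Finset.sum_congr rfl fun i _ => ?_
    rw [← Finset.sum_add_distrib]
    refine Finset.sum_congr rfl fun j _ => ?_
    rw [max_eq_left (hγ i j)]
  have hset : {γ : Matrix (Fin n1) (Fin n2) ℝ |
        (∀ i j, 0 ≤ γ i j) ∧ lyapunovF gstar γ ≤ (M : EReal)} =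
      {γ : Matrix (Fin n1) (Fin n2) ℝ | ∀ i j, γ i j ∈ Set.Icc (ε i j) (C i j)} ∩
        {γ | f γ ≤ M} := by
    ext γ
    simp only [Set.mem_setOf_eq, Set.mem_inter_iff, Set.mem_Icc]
    constructor
    · rintro ⟨hnn, hF⟩
      have hpos : ∀ i j, 0 < γ i j := by
        by_contra hcon
        rw [lyapunovF, if_neg hcon] at hF
        exact (not_le.2 (EReal.coe_lt_top M)) hF
      rw [lyapunovF, if_pos hpos] at hF
      have hFr : (∑ i, ∑ j, gstar i j * (Real.log (gstar i j / γ i j) - 1)) + ∑ i, ∑ j, γ i j ≤ M :=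
        EReal.coe_le_coe_iff.mp hF
      have hsum : ∑ i, ∑ j, (gstar i j * (Real.log (gstar i j / γ i j) - 1) + γ i j) ≤ M := by
        simp only [Finset.sum_add_distrib]
        exact hFr
      have hterm : ∀ i j, gstar i j * (Real.log (gstar i j / γ i j) - 1) + γ i j ≤ M := by
        intro i j
        have hnn2 : ∀ a b, 0 ≤ gstar a b * (Real.log (gstar a b / γ a b) - 1) + γ a b :=
          fun a b => term_nonneg' _ _ (hgs a b) (hpos a b)
        calc gstar i j * (Real.log (gstar i j / γ i j) - 1) + γ i j
            ≤ ∑ b, (gstar i b * (Real.log (gstar i b / γ i b) - 1) + γ i b) :=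
              Finset.single_le_sum (fun b _ => hnn2 i b) (Finset.mem_univ j)
          _ ≤ ∑ a, ∑ b, (gstar a b * (Real.log (gstar a b / γ a b) - 1) + γ a b) :=
              Finset.single_le_sum
                (fun a _ => Finset.sum_nonneg fun b _ => hnn2 a b) (Finset.mem_univ i)
          _ ≤ M := hsum
      have hbd : ∀ i j, ε i j ≤ γ i j ∧ γ i j ≤ C i j := fun i j =>
        term_bounds _ _ _ (hgs i j) (hpos i j) (hterm i j)
      refine ⟨hbd, ?_⟩
      rw [hval γ fun i j => (hbd i j).1]
      exact hFr
    · rintro ⟨hbox, hfM⟩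
      have hpos : ∀ i j, 0 < γ i j := fun i j => lt_of_lt_of_le (hεpos i j) (hbox i j).1
      refine ⟨fun i j => (hpos i j).le, ?_⟩
      rw [lyapunovF, if_pos hpos, ← hval γ fun i j => (hbox i j).1]
      exact EReal.coe_le_coe_iff.mpr hfM
  rw [hset]
  have hKc : IsCompact {γ : Matrix (Fin n1) (Fin n2) ℝ |
      ∀ i j, γ i j ∈ Set.Icc (ε i j) (C i j)} := by
    have : {γ : Matrix (Fin n1) (Fin n2) ℝ | ∀ i j, γ i j ∈ Set.Icc (ε i j) (C i j)} =
        Set.univ.pi (fun i => Set.univ.pi fun j => Set.Icc (ε i j) (C i j)) := by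
      ext γ
      constructor
      · intro h i _ j _; exact h i j
      · intro h i j; exact h i (Set.mem_univ i) j (Set.mem_univ j)
    rw [this]
    exact isCompact_univ_pi fun i => isCompact_univ_pi fun j => isCompact_Icc
  exact hKc.inter_right (isClosed_Iic.preimage hcont)
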